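/- With the setting of the polar factorization (T optimal from ρ to ν, invertible; U measurable with U(ρ)=ν; R = T⁻¹∘U), the map R minimizes ∫ |U(x) - R'(x)|² dρ(x) over all measurable R' : ℝⁿ → ℝⁿ with R'(ρ) = ρ, and ∫|U - R|² dρ equals the squared Wasserstein-2 distance d²(ρ,ν). -/

import Mathlib

open MeasureTheory
open scoped ENNReal

/-- The rotation R = T⁻¹∘U from the polar factorization minimizes ∫|U - R'|² dρ over all
ρ-preserving maps R', and the minimum equals the squared Wasserstein-2 distance. -/
theorem polar_factorization_minimality (n : ℕ)
    (ρ ν : Measure (EuclideanSpace ℝ (Fin n)))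
    [IsProbabilityMeasure ρ] [IsProbabilityMeasure ν]
    (hρ2 : ∫⁻ x, ENNReal.ofReal (‖x‖ ^ 2) ∂ρ < ∞)
    (hν2 : ∫⁻ x, ENNReal.ofReal (‖x‖ ^ 2) ∂ν < ∞)
    (T Tinv U : EuclideanSpace ℝ (Fin n) → EuclideanSpace ℝ (Fin n))
    (hT : Measurable T) (hTinv : Measurable Tinv) (hU : Measurable U)
    (hTρ : ρ.map T = ν)
    (hopt : ∀ β : Measure (EuclideanSpace ℝ (Fin n) × EuclideanSpace ℝ (Fin n)),
      β.map Prod.fst = ρ → β.map Prod.snd = ν →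
      ∫⁻ x, ENNReal.ofReal (‖x - T x‖ ^ 2) ∂ρ ≤
        ∫⁻ p, ENNReal.ofReal (‖p.1 - p.2‖ ^ 2) ∂β)
    (hinv_left : ∀ᵐ x ∂ρ, Tinv (T x) = x)
    (hinv_right : ∀ᵐ y ∂ν, T (Tinv y) = y)
    (hUρ : ρ.map U = ν) :
    (∀ R' : EuclideanSpace ℝ (Fin n) → EuclideanSpace ℝ (Fin n), Measurable R' →
      ρ.map R' = ρ →
      ∫⁻ x, ENNReal.ofReal (‖U x - Tinv (U x)‖ ^ 2) ∂ρ ≤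
        ∫⁻ x, ENNReal.ofReal (‖U x - R' x‖ ^ 2) ∂ρ) ∧
    ∫⁻ x, ENNReal.ofReal (‖U x - Tinv (U x)‖ ^ 2) ∂ρ =
      ⨅ (β : Measure (EuclideanSpace ℝ (Fin n) × EuclideanSpace ℝ (Fin n)))
        (_ : β.map Prod.fst = ρ ∧ β.map Prod.snd = ν),
        ∫⁻ p, ENNReal.ofReal (‖p.1 - p.2‖ ^ 2) ∂β := by
  set g : EuclideanSpace ℝ (Fin n) → ℝ≥0∞ :=
    fun y => ENNReal.ofReal (‖y - Tinv y‖ ^ 2) with hg_def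
  have hg : Measurable g :=
    ((measurable_id.sub hTinv).norm.pow_const 2).ennreal_ofReal
  have hcost : Measurable (fun p : EuclideanSpace ℝ (Fin n) × EuclideanSpace ℝ (Fin n) =>
      ENNReal.ofReal (‖p.1 - p.2‖ ^ 2)) :=
    ((measurable_fst.sub measurable_snd).norm.pow_const 2).ennreal_ofReal
  have val_eq : ∫⁻ x, ENNReal.ofReal (‖U x - Tinv (U x)‖ ^ 2) ∂ρ =
      ∫⁻ x, ENNReal.ofReal (‖x - T x‖ ^ 2) ∂ρ := by
    calc ∫⁻ x, g (U x) ∂ρ = ∫⁻ y, g y ∂ν := by rw [← hUρ, lintegral_map hg hU]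
      _ = ∫⁻ x, g (T x) ∂ρ := by rw [← hTρ, lintegral_map hg hT]
      _ = ∫⁻ x, ENNReal.ofReal (‖x - T x‖ ^ 2) ∂ρ := by
          refine lintegral_congr_ae (hinv_left.mono fun x hx => ?_)
          simp [hg_def, hx, norm_sub_rev, enorm_sub_rev]
  constructor
  · intro R' hR' hR'ρ
    have hpair : Measurable fun x => (R' x, U x) := hR'.prodMk hU
    set β := ρ.map (fun x => (R' x, U x)) with hβ_def
    have h1 : β.map Prod.fst = ρ := by
      rw [hβ_def, Measure.map_map measurable_fst hpair]; exact hR'ρ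
    have h2 : β.map Prod.snd = ν := by
      rw [hβ_def, Measure.map_map measurable_snd hpair]; exact hUρ
    have h := hopt β h1 h2
    rw [val_eq]
    calc ∫⁻ x, ENNReal.ofReal (‖x - T x‖ ^ 2) ∂ρ
        ≤ ∫⁻ p, ENNReal.ofReal (‖p.1 - p.2‖ ^ 2) ∂β := h
      _ = ∫⁻ x, ENNReal.ofReal (‖R' x - U x‖ ^ 2) ∂ρ := by
          rw [hβ_def, lintegral_map hcost hpair]
      _ = ∫⁻ x, ENNReal.ofReal (‖U x - R' x‖ ^ 2) ∂ρ := by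
          simp_rw [norm_sub_rev]
  · rw [val_eq]
    apply le_antisymm
    · exact le_iInf fun β => le_iInf fun hβ => hopt β hβ.1 hβ.2
    · have hpair : Measurable fun x : EuclideanSpace ℝ (Fin n) => (x, T x) :=
        measurable_id.prodMk hT
      set β₀ := ρ.map (fun x => (x, T x)) with hβ₀_def
      have h1 : β₀.map Prod.fst = ρ := by
        rw [hβ₀_def, Measure.map_map measurable_fst hpair]
        exact Measure.map_id
      have h2 : β₀.map Prod.snd = ν := by
        rw [hβ₀_def, Measure.map_map measurable_snd hpair]; exact hTρ
      refine iInf₂_le_of_le β₀ ⟨h1, h2⟩ (le_of_eq ?_)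
      rw [hβ₀_def, lintegral_map hcost hpair]
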